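/- Let θ, θ^W > 0, ρ^W > 0, u, u^W ∈ ℝ³ with u₂ = u₂^W, and let e₂ = (0,1,0). Then the e₂-moment of the incoming half-Maxwellian satisfies p_{e₂} = C_{θ,e₂} ∫_{{v ∈ ℝ³ : v₂ < 0}} ρ^W (2π θ^W)^{−3/2} exp(−|√θ v + u − u^W|²/(2θ^W)) H_{θ,e₂}(v) e^{|v|²/2} dv = −ρ^W √(θ^W/(2π)). -/

import Mathlib

open MeasureTheory Real

/-- Probabilists' Hermite polynomial `He n x`, with the convention `He n ≡ 0` for `n < 0`. -/
noncomputable def He (n : ℤ) (x : ℝ) : ℝ :=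
  if n < 0 then 0 else Polynomial.aeval x (Polynomial.hermite n.toNat)

/-- The Hermite basis function
`H_{θ,α}(v) = ∏_{d=1}^3 (2π)^{−1/2} θ^{−(α_d+1)/2} He_{α_d}(v_d) e^{−v_d²/2}`. -/
noncomputable def Hb (θ : ℝ) (α : Fin 3 → ℕ) (v : Fin 3 → ℝ) : ℝ :=
  ∏ d, (2 * Real.pi) ^ (-(1 / 2 : ℝ)) * θ ^ (-(((α d : ℝ) + 1) / 2)) *
    He (α d) (v d) * Real.exp (-(v d) ^ 2 / 2)

/-- `C_{θ,α} = (2π)^{3/2} θ^{|α|+3}/(α₁! α₂! α₃!)`. -/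
noncomputable def Cc (θ : ℝ) (α : Fin 3 → ℕ) : ℝ :=
  (2 * Real.pi) ^ ((3 : ℝ) / 2) * θ ^ (α 0 + α 1 + α 2 + 3) /
    ((Nat.factorial (α 0)) * (Nat.factorial (α 1)) * (Nat.factorial (α 2)))

open scoped Topology

open Filter in
lemma int_Ioi (b : ℝ) (hb : 0 < b) :
    ∫ x in Set.Ioi (0:ℝ), x * Real.exp (-b * x ^ 2) = (2 * b)⁻¹ := by
  have hb' : (2*b) ≠ 0 := by positivity
  have A : ∀ x : ℝ, HasDerivAt (fun x => -(2 * b)⁻¹ * Real.exp (-b * x ^ 2))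
      (x * Real.exp (-b * x ^ 2)) x := by
    intro x
    convert (((hasDerivAt_pow 2 x).const_mul (-b)).exp.const_mul (-(2 * b)⁻¹)) using 1
    · rfl
    · rfl
    simp
    field_simp
  have B : Tendsto (fun y : ℝ ↦ -(2 * b)⁻¹ * Real.exp (-b * y ^ 2)) atTop (nhds 0) := by
    have h1 : Tendsto (fun y : ℝ => -b * y^2) atTop atBot :=
      (tendsto_pow_atTop two_ne_zero).const_mul_atTop_of_neg (neg_lt_zero.2 hb)
    have h2 := Real.tendsto_exp_atBot.comp h1
    have := h2.const_mul (-(2 * b)⁻¹)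
    simpa using this
  have := integral_Ioi_of_hasDerivAt_of_tendsto' (a := 0) (fun x _ => A x)
    (integrable_mul_exp_neg_mul_sq hb).integrableOn B
  simpa using this

lemma int_Iio (b : ℝ) (hb : 0 < b) :
    ∫ x in Set.Iio (0:ℝ), x * Real.exp (-b * x ^ 2) = -(2 * b)⁻¹ := by
  rw [setIntegral_congr_set Iio_ae_eq_Iic]
  have h := integral_comp_neg_Ioi (0:ℝ) (fun x => x * Real.exp (-b * x^2))
  simp only [neg_zero] at h
  rw [← h]
  have : ∀ x : ℝ, -x * Real.exp (-b * (-x)^2) = -(x * Real.exp (-b * x^2)) := by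
    intro x; rw [neg_sq]; ring
  simp only [this]
  rw [integral_neg, int_Ioi b hb]

lemma gauss_shift (a c b : ℝ) (ha : 0 < a) (hb : 0 < b) :
    ∫ x : ℝ, Real.exp (-(a * x + c)^2 / (2*b)) = Real.sqrt (2*Real.pi*b) / a := by
  simp_rw [show ∀ x:ℝ, -(a*x+c)^2/(2*b) = -(2*b)⁻¹ * (a*x+c)^2 from fun x => by ring]
  have key : (∫ x : ℝ, Real.exp (-(2*b)⁻¹ * (a * x + c)^2))
      = |a⁻¹| • ∫ y : ℝ, Real.exp (-(2*b)⁻¹ * y^2) := by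
    rw [← integral_add_right_eq_self (fun y => Real.exp (-(2*b)⁻¹ * y^2)) c]
    exact MeasureTheory.Measure.integral_comp_mul_left (fun y => Real.exp (-(2*b)⁻¹ * (y + c)^2)) a
  rw [key, integral_gaussian, smul_eq_mul, abs_of_pos (inv_pos.2 ha)]
  rw [div_inv_eq_mul, show Real.pi * (2*b) = 2*Real.pi*b by ring, inv_mul_eq_div]


lemma He_zero (x : ℝ) : He 0 x = 1 := by simp [He]
lemma He_one (x : ℝ) : He 1 x = x := by simp [He, Polynomial.hermite_one]


/-- When `u₂ = u₂^W`, the `e₂`-moment of the incoming half-Maxwellian is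
`p_{e₂} = −ρ^W √(θ^W/(2π))`. -/
theorem halfMaxwellian_e2_moment (θ θW ρW : ℝ) (hθ : 0 < θ) (hθW : 0 < θW)
    (hρW : 0 < ρW) (u uW : Fin 3 → ℝ) (hu : u 1 = uW 1) :
    Cc θ (fun d => if d = 1 then 1 else 0) *
      (∫ v in {v : Fin 3 → ℝ | v 1 < 0},
        ρW * (2 * Real.pi * θW) ^ (-(3 : ℝ) / 2) *
          Real.exp (-(∑ d, (Real.sqrt θ * v d + u d - uW d) ^ 2) / (2 * θW)) *
          Hb θ (fun d => if d = 1 then 1 else 0) v * Real.exp ((∑ d, (v d) ^ 2) / 2))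
      = -ρW * Real.sqrt (θW / (2 * Real.pi)) := by
  set f : Fin 3 → ℝ → ℝ := fun d x =>
    if d = 1 then ((2*Real.pi) ^ (-(1/2):ℝ) * θ ^ (-1:ℝ)) *
      (x * Real.exp (-(Real.sqrt θ * x + u d - uW d)^2/(2*θW)))
    else ((2*Real.pi) ^ (-(1/2):ℝ) * θ ^ (-(1/2):ℝ)) *
      Real.exp (-(Real.sqrt θ * x + u d - uW d)^2/(2*θW)) with hf
  have h3 : ∀ a b c : ℝ, Real.exp ((-a + (-b + -c))/(2*θW))
      = Real.exp (-c/(2*θW)) * Real.exp (-b/(2*θW)) * Real.exp (-a/(2*θW)) := by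
    intro a b c; rw [← Real.exp_add, ← Real.exp_add]; congr 1; ring
  have h4 : ∀ a b c : ℝ, Real.exp ((a + b + c)/2)
      = Real.exp (a/2) * Real.exp (b/2) * Real.exp (c/2) := by
    intro a b c; rw [← Real.exp_add, ← Real.exp_add]; congr 1; ring
  have h5 : ∀ a : ℝ, Real.exp (a^2/2) = (Real.exp (-a^2/2))⁻¹ := by
    intro a; rw [← Real.exp_neg]; congr 1; ring
  have hfun : ∀ v : Fin 3 → ℝ,
      ρW * (2 * Real.pi * θW) ^ (-(3 : ℝ) / 2) *
          Real.exp (-(∑ d, (Real.sqrt θ * v d + u d - uW d) ^ 2) / (2 * θW)) *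
          Hb θ (fun d => if d = 1 then 1 else 0) v * Real.exp ((∑ d, (v d) ^ 2) / 2)
        = ρW * (2 * Real.pi * θW) ^ (-(3 : ℝ) / 2) * ∏ d, f d (v d) := by
    intro v
    simp only [Hb, Fin.prod_univ_three, Fin.sum_univ_three, hf]
    norm_num [He_zero, He_one, show (2:Fin 3) ≠ 1 from by decide]
    rw [h3, h4]
    simp only [h5]
    field_simp [Real.exp_ne_zero]
  simp only [hfun]
  rw [integral_const_mul]
  have hS : MeasurableSet {v : Fin 3 → ℝ | v 1 < 0} :=
    measurable_pi_apply 1 measurableSet_Iio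
  rw [← integral_indicator hS]
  set g : Fin 3 → ℝ → ℝ := fun d => if d = 1 then (Set.Iio 0).indicator (f 1) else f d with hg
  have hind : (fun v : Fin 3 → ℝ =>
      Set.indicator {v : Fin 3 → ℝ | v 1 < 0} (fun v => ∏ d, f d (v d)) v)
      = fun v => ∏ d, g d (v d) := by
    funext v
    simp only [hg, Fin.prod_univ_three, if_pos rfl, if_true, if_neg (show (0:Fin 3) ≠ 1 from by decide),
      if_neg (show (2:Fin 3) ≠ 1 from by decide)]
    by_cases h : v 1 < 0
    · rw [Set.indicator_of_mem (show v ∈ {v : Fin 3 → ℝ | v 1 < 0} from h),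
        Set.indicator_of_mem (show v 1 ∈ Set.Iio 0 from h)]
    · rw [Set.indicator_of_notMem (show v ∉ {v : Fin 3 → ℝ | v 1 < 0} from h),
        Set.indicator_of_notMem (show v 1 ∉ Set.Iio 0 from h)]
      ring
  rw [hind, MeasureTheory.integral_fintype_prod_volume_eq_prod g, Fin.prod_univ_three]
  have hg0 : g 0 = f 0 := by
    simp only [hg]; rw [if_neg (show (0:Fin 3) ≠ 1 from by decide)]
  have hg2 : g 2 = f 2 := by
    simp only [hg]; rw [if_neg (show (2:Fin 3) ≠ 1 from by decide)]
  have hg1 : g 1 = (Set.Iio 0).indicator (f 1) := by simp only [hg, if_pos rfl]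
  have hside : ∀ d : Fin 3, d ≠ 1 →
      ∫ x : ℝ, f d x = ((2*Real.pi) ^ (-(1/2):ℝ) * θ ^ (-(1/2):ℝ)) *
        (Real.sqrt (2*Real.pi*θW) / Real.sqrt θ) := by
    intro d hd
    simp only [hf, if_neg hd]
    rw [integral_const_mul]
    congr 1
    simp_rw [add_sub_assoc]
    exact gauss_shift (Real.sqrt θ) (u d - uW d) θW (Real.sqrt_pos.2 hθ) hθW
  have hmid : ∫ x : ℝ, g 1 x =
      ((2*Real.pi) ^ (-(1/2):ℝ) * θ ^ (-1:ℝ)) * -(2 * (θ/(2*θW)))⁻¹ := by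
    rw [hg1, MeasureTheory.integral_indicator measurableSet_Iio]
    simp only [hf, if_pos rfl]
    rw [hu]
    simp only [add_sub_cancel_right]
    simp_rw [show ∀ x:ℝ, -(Real.sqrt θ * x)^2/(2*θW) = -(θ/(2*θW))*x^2 from fun x => by
      rw [mul_pow, Real.sq_sqrt hθ.le]; ring]
    rw [integral_const_mul, int_Iio _ (by positivity)]
  rw [hg0, hg2, hside 0 (by decide), hside 2 (by decide), hmid]
  -- final numeric identity
  norm_num [Cc, show (2:Fin 3) ≠ 1 from by decide, Nat.factorial]
  have e1 : (2*Real.pi) ^ (-(1/2):ℝ) = (Real.sqrt (2*Real.pi))⁻¹ := by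
    rw [Real.rpow_neg (by positivity), Real.sqrt_eq_rpow]
  have e2 : θ ^ (-(1/2):ℝ) = (Real.sqrt θ)⁻¹ := by
    rw [Real.rpow_neg hθ.le, Real.sqrt_eq_rpow]
  have e3 : θ ^ (-1:ℝ) = θ⁻¹ := Real.rpow_neg_one θ
  have e4 : (2*Real.pi*θW) ^ (-(3/2):ℝ) = (Real.sqrt (2*Real.pi*θW) ^ 3)⁻¹ := by
    rw [show (-(3/2):ℝ) = (1/2) * (-3) by norm_num, Real.rpow_mul (by positivity),
      ← Real.sqrt_eq_rpow, show ((-3:ℝ)) = ((-3:ℤ):ℝ) by norm_num, Real.rpow_intCast,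
      zpow_neg, show ((3:ℤ)) = ((3:ℕ):ℤ) by norm_num, zpow_natCast]
  have e5 : (2*Real.pi) ^ ((3:ℝ)/2) = Real.sqrt (2*Real.pi) ^ 3 := by
    rw [show ((3:ℝ)/2) = (1/2) * 3 by norm_num, Real.rpow_mul (by positivity),
      ← Real.sqrt_eq_rpow, show ((3:ℝ)) = ((3:ℕ):ℝ) by norm_num, Real.rpow_natCast]
  have e6 : Real.sqrt (2*Real.pi*θW) = Real.sqrt (2*Real.pi) * Real.sqrt θW :=
    Real.sqrt_mul (by positivity) _
  have e7 : Real.sqrt (θW/(2*Real.pi)) = Real.sqrt θW / Real.sqrt (2*Real.pi) :=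
    Real.sqrt_div hθW.le _
  rw [e1, e2, e3, e4, e5, e6, e7]
  set a := Real.sqrt (2*Real.pi) with hadef
  set b := Real.sqrt θ with hbdef
  set c := Real.sqrt θW with hcdef
  have ha : 0 < a := Real.sqrt_pos.2 (by positivity)
  have hb : 0 < b := Real.sqrt_pos.2 hθ
  have hc : 0 < c := Real.sqrt_pos.2 hθW
  have hθb : θ = b^2 := (Real.sq_sqrt hθ.le).symm
  have hθWc : θW = c^2 := (Real.sq_sqrt hθW.le).symm
  rw [hθb, hθWc]
  field_simp
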